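/- Let X be a finite-dimensional real normed linear space and let C ⊆ X be a nonempty closed convex set. Then C has the strong separation property if and only if barc(C) = Int barc(C) ∪ {0}. Furthermore, if C is unbounded and has the strong separation property, then the interior of C is nonempty. -/

import Mathlib

/-- The barrier cone of a set `C` in a normed space. -/
def barrierCone {X : Type*} [NormedAddCommGroup X] [NormedSpace ℝ X] (C : Set X) :
    Set (X →L[ℝ] ℝ) :=
  {f | ∃ b : ℝ, ∀ c ∈ C, f c ≤ b}

/-- `C` and `D` are strongly separated. -/
def StronglySeparated {X : Type*} [NormedAddCommGroup X] [NormedSpace ℝ X]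
    (C D : Set X) : Prop :=
  ∃ f : X →L[ℝ] ℝ, f ≠ 0 ∧ ∃ a b : ℝ, a < b ∧ (∀ c ∈ C, f c ≤ a) ∧ ∀ d ∈ D, b ≤ f d

/-- `C` has the strong separation property. -/
def StrongSepProperty {X : Type*} [NormedAddCommGroup X] [NormedSpace ℝ X]
    (C : Set X) : Prop :=
  ∀ D : Set X, D.Nonempty → IsClosed D → Convex ℝ D → Disjoint C D → StronglySeparated C D

open Filter Topology Set Pointwise

section AuxLemmas
variable {X : Type*} [NormedAddCommGroup X] [NormedSpace ℝ X]

lemma barrier_zero_mem (C : Set X) : (0 : X →L[ℝ] ℝ) ∈ barrierCone C :=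
  ⟨0, fun c _ => by simp⟩


/-- A barrier functional is ≤ 0 on any recession direction. -/
lemma apply_le_of_recession {C : Set X} {g : X →L[ℝ] ℝ} (hg : g ∈ barrierCone C)
    {x : X} (hx : x ∈ C) {v : X} (hv : ∀ t : ℝ, 0 ≤ t → x + t • v ∈ C) : g v ≤ 0 := by
  obtain ⟨b, hb⟩ := hg
  by_contra h
  push_neg at h
  have hbx : g x ≤ b := hb x hx
  have hdiv : 0 ≤ (b - g x) / g v := div_nonneg (by linarith) h.le
  have := hb _ (hv ((b - g x) / g v + 1) (by linarith))
  rw [map_add, map_smul] at this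
  simp only [smul_eq_mul] at this
  have htv : ((b - g x) / g v + 1) * g v = (b - g x) + g v := by
    field_simp
  rw [htv] at this
  linarith


/-- Limits of normalized unbounded sequences in a closed convex set are recession directions. -/
lemma recession_of_tendsto {C : Set X} (hcl : IsClosed C) (hconv : Convex ℝ C) {v : X}
    (y : ℕ → X) (hy : ∀ n, y n ∈ C) (r : ℕ → ℝ)
    (hr : Tendsto r atTop atTop)
    (hlim : Tendsto (fun n => (r n)⁻¹ • y n) atTop (𝓝 v)) :
    ∀ x ∈ C, ∀ t : ℝ, 0 ≤ t → x + t • v ∈ C := by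
  intro x hx t ht
  have hrinv : Tendsto (fun n => (r n)⁻¹) atTop (𝓝 0) := hr.inv_tendsto_atTop
  have hlim2 : Tendsto (fun n => (1 - t * (r n)⁻¹) • x + t • ((r n)⁻¹ • y n)) atTop
      (𝓝 ((1 - t * 0) • x + t • v)) := by
    refine Tendsto.add (Tendsto.smul ?_ tendsto_const_nhds) (Tendsto.smul tendsto_const_nhds hlim)
    exact (tendsto_const_nhds.sub (hrinv.const_mul t))
  rw [show (1 - t * 0) • x + t • v = x + t • v by simp] at hlim2
  refine hcl.mem_of_tendsto hlim2 ?_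
  have hev : ∀ᶠ n in atTop, max t 1 ≤ r n := hr.eventually_ge_atTop _
  filter_upwards [hev] with n hn
  have hrn : (0:ℝ) < r n := lt_of_lt_of_le (by positivity) hn
  have h1 : 0 ≤ t * (r n)⁻¹ := by positivity
  have h2 : t * (r n)⁻¹ ≤ 1 := by
    rw [mul_inv_le_iff₀ hrn, one_mul]
    exact le_trans (le_max_left t 1) hn
  have := hconv hx (hy n) (by linarith : (0:ℝ) ≤ 1 - t * (r n)⁻¹) h1 (by ring)
  convert this using 2
  rw [smul_smul]



/-- Interior barrier functionals are < 0 on nonzero recession directions. -/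
lemma interior_barrier_neg {C : Set X} {f : X →L[ℝ] ℝ}
    (hf : f ∈ interior (barrierCone C)) {x v : X} (hx : x ∈ C)
    (hv : ∀ t : ℝ, 0 ≤ t → x + t • v ∈ C) (hv0 : v ≠ 0) : f v < 0 := by
  obtain ⟨g, u, hgu, hguv⟩ :=
    geometric_hahn_banach_closed_point (convex_singleton (0:X)) isClosed_singleton
      (by simpa using hv0 : v ∉ ({0} : Set X))
  have hg0 : g 0 = 0 := map_zero g
  have hgv : 0 < g v := lt_trans (by rw [← hg0]; exact hgu 0 rfl) hguv
  obtain ⟨ε, hε, hball⟩ := Metric.isOpen_iff.1 isOpen_interior f hf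
  set c : ℝ := ε / (2 * (‖g‖ + 1)) with hc
  have hgnorm : (0:ℝ) ≤ ‖g‖ := norm_nonneg _
  have hcpos : 0 < c := by positivity
  have hmem : f + c • g ∈ barrierCone C := by
    refine interior_subset (hball ?_)
    rw [Metric.mem_ball, dist_eq_norm]
    have : f + c • g - f = c • g := by abel
    rw [this, norm_smul c g, Real.norm_eq_abs, abs_of_pos hcpos]
    calc c * ‖g‖ ≤ c * (‖g‖ + 1) := by nlinarith
    _ = ε * (‖g‖+1) / (2 * (‖g‖ + 1)) := by rw [hc]; ring
    _ < ε := by rw [div_lt_iff₀ (by positivity)]; nlinarith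
  have h1 : (f + c • g) v ≤ 0 := apply_le_of_recession hmem hx hv
  have h2 : (f + c • g) v = f v + c * g v := by
    simp [ContinuousLinearMap.add_apply, ContinuousLinearMap.smul_apply]
  nlinarith


/-- Nonzero functional vanishing on a proper subspace (finite dimensions). -/
lemma exists_functional_vanishing [FiniteDimensional ℝ X] (W : Submodule ℝ X) (hW : W ≠ ⊤) :
    ∃ f : X →L[ℝ] ℝ, f ≠ 0 ∧ ∀ w ∈ W, f w = 0 := by
  obtain ⟨x, hx⟩ : ∃ x, x ∉ W := by
    by_contra h
    push_neg at h
    exact hW (Submodule.eq_top_iff'.2 h)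
  have hWc : IsClosed (W : Set X) := W.closed_of_finiteDimensional
  obtain ⟨f, u, hfu, hfx⟩ := geometric_hahn_banach_closed_point W.convex hWc hx
  have h0 : (0:ℝ) < u := by simpa using hfu 0 W.zero_mem
  have hvan : ∀ w ∈ W, f w = 0 := by
    intro w hw
    by_contra hne
    have hmem : ((|u| + 1) / f w) • w ∈ W := W.smul_mem _ hw
    have := hfu _ hmem
    rw [map_smul] at this
    simp only [smul_eq_mul] at this
    rw [div_mul_cancel₀ _ hne] at this
    have : |u| + 1 < u := this
    have := le_abs_self u
    linarith
  refine ⟨f, ?_, hvan⟩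
  intro hf0
  rw [hf0] at hfx
  simp at hfx
  linarith


/-- Strong separation from a positive gap. -/
lemma sep_of_gap {C D : Set X} (hCconv : Convex ℝ C) (hDconv : Convex ℝ D)
    (hCne : C.Nonempty) (hDne : D.Nonempty) {δ : ℝ} (hδ : 0 < δ)
    (hgap : ∀ c ∈ C, ∀ d ∈ D, δ ≤ ‖c - d‖) :
    ∃ f : X →L[ℝ] ℝ, f ≠ 0 ∧ ∃ a b : ℝ, a < b ∧ (∀ c ∈ C, f c ≤ a) ∧ ∀ d ∈ D, b ≤ f d := by
  set U : Set X := C + Metric.ball (0:X) δ with hU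
  have hUopen : IsOpen U := Metric.isOpen_ball.add_left
  have hUconv : Convex ℝ U := hCconv.add (convex_ball 0 δ)
  have hdisj : Disjoint U D := by
    rw [Set.disjoint_left]
    rintro x ⟨c, hc, e, he, rfl⟩ hxD
    simp only [Metric.mem_ball, dist_zero_right] at he
    have h1 := hgap c hc _ hxD
    rw [show c - (c + e) = -e by abel, norm_neg] at h1
    linarith
  obtain ⟨f, u, h1, h2⟩ := geometric_hahn_banach_open hUconv hUopen hDconv hdisj
  obtain ⟨c₀, hc₀⟩ := hCne
  obtain ⟨d₀, hd₀⟩ := hDne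
  have hc₀U : c₀ ∈ U := ⟨c₀, hc₀, 0, by simp [hδ], by simp⟩
  have hf0 : f ≠ 0 := by
    rintro rfl
    have := h1 c₀ hc₀U
    have := h2 d₀ hd₀
    simp only [ContinuousLinearMap.zero_apply] at *
    linarith
  obtain ⟨x₀, hx₀⟩ : ∃ x, f x ≠ 0 := by
    by_contra h
    push_neg at h
    exact hf0 (ContinuousLinearMap.ext fun x => by simp [h x])
  set x₁ : X := (f x₀)⁻¹ • x₀ with hx₁
  have hfx₁ : f x₁ = 1 := by
    rw [hx₁, map_smul, smul_eq_mul, inv_mul_cancel₀ hx₀]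
  have hx₁0 : x₁ ≠ 0 := by
    intro h
    rw [h, map_zero] at hfx₁
    norm_num at hfx₁
  have hnx₁ : 0 < ‖x₁‖ := norm_pos_iff.2 hx₁0
  set κ : ℝ := δ / (2 * ‖x₁‖) with hκ
  have hκpos : 0 < κ := by positivity
  have hCle : ∀ c ∈ C, f c ≤ u - κ := by
    intro c hc
    have hmem : c + κ • x₁ ∈ U := by
      refine ⟨c, hc, κ • x₁, ?_, rfl⟩
      simp only [Metric.mem_ball, dist_zero_right, norm_smul, Real.norm_eq_abs,
        abs_of_pos hκpos]
      rw [hκ, div_mul_eq_mul_div, div_lt_iff₀ (by positivity)]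
      nlinarith [hnx₁, hδ]
    have := h1 _ hmem
    rw [map_add, map_smul, hfx₁, smul_eq_mul, mul_one] at this
    linarith
  exact ⟨f, hf0, u - κ, u, by linarith, hCle, h2⟩


/-- Extract a unit direction from a norm-unbounded sequence in a set. -/
lemma exists_unit_limit [FiniteDimensional ℝ X] (y : ℕ → X)
    (hnorm : ∀ n : ℕ, (n : ℝ) + 1 ≤ ‖y n‖) :
    ∃ v : X, ‖v‖ = 1 ∧ ∃ φ : ℕ → ℕ, StrictMono φ ∧
      Tendsto (fun n => ‖y (φ n)‖⁻¹ • y (φ n)) atTop (𝓝 v) := by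
  have hpos : ∀ n, (0:ℝ) < ‖y n‖ := fun n => lt_of_lt_of_le (by positivity) (hnorm n)
  set u : ℕ → X := fun n => ‖y n‖⁻¹ • y n with hu
  have husph : ∀ n, u n ∈ Metric.sphere (0:X) 1 := by
    intro n
    simp only [hu, Metric.mem_sphere, dist_zero_right, norm_smul, Real.norm_eq_abs,
      abs_of_pos (inv_pos.2 (hpos n))]
    rw [inv_mul_cancel₀ (hpos n).ne']
  obtain ⟨v, hv, φ, hφ, hlim⟩ :=
    (isCompact_sphere (0:X) 1).tendsto_subseq husph
  refine ⟨v, by simpa [dist_eq_norm] using hv, φ, hφ, hlim⟩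


/-- Weak separation of two disjoint convex sets whose difference accumulates at `0`. -/
lemma weak_sep [FiniteDimensional ℝ X] {C D : Set X} (hC : Convex ℝ C) (hD : Convex ℝ D)
    (hCne : C.Nonempty) (hDne : D.Nonempty) (hdisj : ∀ x, x ∈ C → x ∉ D)
    (h0 : (0:X) ∈ closure (C - D)) :
    ∃ f : X →L[ℝ] ℝ, f ≠ 0 ∧ ∀ c ∈ C, ∀ d ∈ D, f c ≤ f d := by
  set K : Set X := C - D with hK
  have hKconv : Convex ℝ K := hC.sub hD
  have hK0 : (0:X) ∉ K := by
    rintro ⟨c, hc, d, hd, h⟩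
    have : c = d := by rwa [sub_eq_zero] at h
    exact hdisj c hc (this ▸ hd)
  by_cases hint : (interior K).Nonempty
  · obtain ⟨k₀, hk₀⟩ := hint
    obtain ⟨f, hf⟩ := geometric_hahn_banach_open_point hKconv.interior isOpen_interior
      (fun h => hK0 (interior_subset h))
    rw [map_zero] at hf
    have hfneg : f k₀ < 0 := hf k₀ hk₀
    have hf0 : f ≠ 0 := by
      rintro rfl
      simp only [ContinuousLinearMap.zero_apply] at hfneg
      linarith
    refine ⟨f, hf0, fun c hc d hd => ?_⟩
    -- show f (c - d) ≤ 0 via segment from k₀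
    have hseg : ∀ n : ℕ, ((n:ℝ)+1)⁻¹ • k₀ + ((n:ℝ)/((n:ℝ)+1)) • (c - d) ∈ interior K := by
      intro n
      refine hKconv.combo_interior_self_mem_interior hk₀ ⟨c, hc, d, hd, rfl⟩
        (by positivity) (by positivity) ?_
      field_simp
      ring
    have hlt : ∀ n : ℕ, ((n:ℝ)+1)⁻¹ * f k₀ + ((n:ℝ)/((n:ℝ)+1)) * f (c - d) < 0 := by
      intro n
      simpa [map_add, map_smul, smul_eq_mul] using hf _ (hseg n)
    have htend : Tendsto (fun n : ℕ => ((n:ℝ)+1)⁻¹ * f k₀ + ((n:ℝ)/((n:ℝ)+1)) * f (c - d))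
        atTop (𝓝 (0 * f k₀ + 1 * f (c - d))) := by
      refine Tendsto.add (Tendsto.mul_const _ ?_) (Tendsto.mul_const _ ?_)
      · exact tendsto_one_div_add_atTop_nhds_zero_nat.congr (fun n => by rw [one_div])
      · have h1n : Tendsto (fun n : ℕ => ((n:ℝ)+1)⁻¹) atTop (𝓝 0) :=
          tendsto_one_div_add_atTop_nhds_zero_nat.congr (fun n => by rw [one_div])
        have hsub := (tendsto_const_nhds : Tendsto (fun _ : ℕ => (1:ℝ)) atTop (𝓝 1)).sub h1n
        rw [sub_zero] at hsub
        exact hsub.congr (fun n => by field_simp; ring)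
    have hle : 0 * f k₀ + 1 * f (c - d) ≤ 0 :=
      le_of_tendsto htend (Eventually.of_forall fun n => (hlt n).le)
    rw [map_sub] at hle
    linarith
  · -- K lies in a proper subspace
    have hKne : K.Nonempty := hCne.sub hDne
    have hspan : affineSpan ℝ K ≠ ⊤ := by
      intro h
      rw [← hKconv.interior_nonempty_iff_affineSpan_eq_top] at h
      exact hint h
    have hclosedA : IsClosed ((affineSpan ℝ K : AffineSubspace ℝ X) : Set X) :=
      (affineSpan ℝ K).closed_of_finiteDimensional
    have h0A : (0:X) ∈ affineSpan ℝ K := by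
      have : closure K ⊆ (affineSpan ℝ K : Set X) :=
        closure_minimal (subset_affineSpan ℝ K) hclosedA
      exact this h0
    set W : Submodule ℝ X := (affineSpan ℝ K).direction with hW
    have hWne : W ≠ ⊤ := by
      intro h
      apply hspan
      rw [← AffineSubspace.direction_eq_top_iff_of_nonempty
        ((affineSpan_nonempty (k := ℝ)).2 hKne)]
      exact h
    have hKW : ∀ k ∈ K, k ∈ W := by
      intro k hk
      have := AffineSubspace.vsub_mem_direction (subset_affineSpan ℝ K hk) h0A
      simpa using this
    obtain ⟨f, hf0, hvan⟩ := exists_functional_vanishing W hWne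
    refine ⟨f, hf0, fun c hc d hd => ?_⟩
    have : f (c - d) = 0 := hvan _ (hKW _ ⟨c, hc, d, hd, rfl⟩)
    rw [map_sub] at this
    linarith


set_option maxHeartbeats 1000000 in
/-- SSP implies every nonzero barrier functional is interior. -/
lemma ssp_imp_sub [FiniteDimensional ℝ X] {C : Set X} (hne : C.Nonempty) (hcl : IsClosed C)
    (hconv : Convex ℝ C) (hssp : StrongSepProperty C) :
    barrierCone C ⊆ interior (barrierCone C) ∪ {0} := by
  intro f hf
  by_cases hf0 : f = 0
  · right; simp [hf0]
  left
  by_contra hfint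
  obtain ⟨bb, hbb⟩ := hf
  have hbdd : BddAbove (f '' C) := ⟨bb, by rintro _ ⟨c, hc, rfl⟩; exact hbb c hc⟩
  have hCim : (f '' C).Nonempty := hne.image f
  set s : ℝ := sSup (f '' C) with hs
  have hub : ∀ c ∈ C, f c ≤ s := fun c hc => le_csSup hbdd ⟨c, hc, rfl⟩
  obtain ⟨w₀, hw₀⟩ : ∃ w : X, f w ≠ 0 := by
    by_contra h
    push_neg at h
    exact hf0 (ContinuousLinearMap.ext fun x => by simp [h x])
  set w : X := (f w₀)⁻¹ • w₀ with hwdef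
  have hw : f w = 1 := by rw [hwdef, map_smul, smul_eq_mul, inv_mul_cancel₀ hw₀]
  by_cases hatt : ∃ c₀ ∈ C, f c₀ = s
  · -- sup attained : construct curved set
    obtain ⟨c₀, hc₀, hc₀s⟩ := hatt
    -- extract recession direction v with f v = 0
    have hkey : ∀ n : ℕ, ∃ c ∈ C, ((n:ℝ)+1) ≤ ‖c‖ ∧ -(1/((n:ℝ)+1)) ≤ f (‖c‖⁻¹ • c) := by
      intro n
      set N : ℝ := (n:ℝ)+1 with hN
      have hNpos : (0:ℝ) < N := by positivity
      have hball : ¬ Metric.ball f (1/N) ⊆ barrierCone C := by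
        intro hsub
        exact hfint (mem_interior.2 ⟨_, hsub, Metric.isOpen_ball,
          Metric.mem_ball_self (by positivity)⟩)
      obtain ⟨g, hgball, hgB⟩ := not_subset.1 hball
      obtain ⟨c, hc, hgc⟩ : ∃ c ∈ C, N * (|s| + N) < g c := by
        by_contra h
        push_neg at h
        exact hgB ⟨_, fun c hc => (h c hc)⟩
      have hdist : ‖g - f‖ < 1/N := by
        rw [Metric.mem_ball, dist_eq_norm] at hgball
        exact hgball
      have h5 : g c - f c ≤ ‖g - f‖ * ‖c‖ := by
        have h := (g - f).le_opNorm c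
        rw [Real.norm_eq_abs] at h
        simp only [ContinuousLinearMap.sub_apply] at h
        linarith [le_abs_self (g c - f c)]
      have h6 : ‖g - f‖ * ‖c‖ ≤ (1/N) * ‖c‖ :=
        mul_le_mul_of_nonneg_right hdist.le (norm_nonneg c)
      have h7 : N * (g c - f c) ≤ ‖c‖ := by
        calc N * (g c - f c) ≤ N * ((1/N) * ‖c‖) :=
              mul_le_mul_of_nonneg_left (h5.trans h6) hNpos.le
        _ = ‖c‖ := by field_simp
      have hfc : f c ≤ s := hub c hc
      have habs : s ≤ |s| := le_abs_self s
      have habs0 : 0 ≤ |s| := abs_nonneg s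
      have hN1 : 1 ≤ N := by
        rw [hN]; have : (0:ℝ) ≤ n := Nat.cast_nonneg n; linarith
      have hnn : 0 ≤ (N - 1) * |s| := mul_nonneg (by linarith) habs0
      have hgf2 : N * N ≤ g c - f c := by nlinarith [hnn]
      have h9 : N * (N * N) ≤ N * (g c - f c) := mul_le_mul_of_nonneg_left hgf2 hNpos.le
      have h10 : N ≤ N * (N * N) := by
        nlinarith [mul_nonneg (mul_nonneg hNpos.le (by linarith : (0:ℝ) ≤ N - 1))
          (by linarith : (0:ℝ) ≤ N + 1)]
      have hnormc : N ≤ ‖c‖ := by linarith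
      have hcpos : 0 < ‖c‖ := lt_of_lt_of_le hNpos hnormc
      have hpos2 : 0 ≤ N * (|s| + N) := by positivity
      have h8 : -(1 / N * ‖c‖) ≤ f c := by
        have h56 := h5.trans h6
        linarith
      refine ⟨c, hc, hnormc, ?_⟩
      rw [map_smul, smul_eq_mul]
      have hmul : ‖c‖⁻¹ * (-(1 / N * ‖c‖)) ≤ ‖c‖⁻¹ * f c :=
        mul_le_mul_of_nonneg_left h8 (inv_nonneg.2 hcpos.le)
      calc -(1/N) = ‖c‖⁻¹ * (-(1 / N * ‖c‖)) := by
            field_simp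
      _ ≤ ‖c‖⁻¹ * f c := hmul
    choose c hcC hcnorm hcf using hkey
    obtain ⟨v, hvnorm, φ, hφ, hlim⟩ := exists_unit_limit c hcnorm
    have hv0 : v ≠ 0 := by intro h; rw [h, norm_zero] at hvnorm; norm_num at hvnorm
    have hrtend : Tendsto (fun k => ‖c (φ k)‖) atTop atTop := by
      refine tendsto_atTop_mono ?_ tendsto_natCast_atTop_atTop
      intro k
      calc (k:ℝ) ≤ (φ k : ℝ) := by exact_mod_cast hφ.le_apply
      _ ≤ (φ k : ℝ) + 1 := by linarith
      _ ≤ ‖c (φ k)‖ := hcnorm (φ k)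
    have hrec : ∀ x ∈ C, ∀ t : ℝ, 0 ≤ t → x + t • v ∈ C :=
      recession_of_tendsto hcl hconv (fun k => c (φ k)) (fun k => hcC (φ k)) _ hrtend hlim
    have hfv0 : 0 ≤ f v := by
      have hA : Tendsto (fun k : ℕ => -(1/((k:ℝ)+1))) atTop (𝓝 (-0)) :=
        (tendsto_one_div_add_atTop_nhds_zero_nat).neg
      rw [neg_zero] at hA
      have hB : Tendsto (fun k => f (‖c (φ k)‖⁻¹ • c (φ k))) atTop (𝓝 (f v)) :=
        (f.continuous.tendsto v).comp hlim
      refine le_of_tendsto_of_tendsto' hA hB ?_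
      intro k
      refine le_trans ?_ (hcf (φ k))
      have h1 : (k:ℝ) + 1 ≤ (φ k : ℝ) + 1 := by
        have : (k:ℝ) ≤ (φ k:ℝ) := by exact_mod_cast hφ.le_apply
        linarith
      have h2 : (0:ℝ) < (k:ℝ)+1 := by positivity
      have h3 : (0:ℝ) < (φ k:ℝ)+1 := by positivity
      rw [neg_le_neg_iff]
      exact one_div_le_one_div_of_le h2 h1
    have hfvle : f v ≤ 0 := apply_le_of_recession ⟨bb, hbb⟩ hc₀ (fun t ht => hrec c₀ hc₀ t ht)
    have hfv : f v = 0 := le_antisymm hfvle hfv0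
    -- construct D
    set E : Set (ℝ × ℝ) := {p | 0 ≤ p.1 ∧ 1 ≤ p.1 * p.2} with hE
    set L : ℝ × ℝ →ₗ[ℝ] X :=
      { toFun := fun p => p.1 • v + p.2 • w
        map_add' := fun p q => by
          simp only [Prod.fst_add, Prod.snd_add, add_smul]; abel
        map_smul' := fun a p => by
          simp only [Prod.smul_fst, Prod.smul_snd, smul_eq_mul, mul_smul, RingHom.id_apply,
            smul_add] } with hL
    have hLapp : ∀ p : ℝ × ℝ, L p = p.1 • v + p.2 • w := fun p => rfl
    have hLker : LinearMap.ker L = ⊥ := by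
      rw [LinearMap.ker_eq_bot']
      intro p hp
      rw [hLapp] at hp
      have hfp : f (p.1 • v + p.2 • w) = p.2 := by
        rw [map_add, map_smul, map_smul, hfv, hw, smul_eq_mul, smul_eq_mul]; ring
      rw [hp, map_zero] at hfp
      have hp2 : p.2 = 0 := hfp.symm
      have hp1 : p.1 • v = 0 := by
        rw [hp2, zero_smul, add_zero] at hp
        exact hp
      rcases smul_eq_zero.1 hp1 with h | h
      · exact Prod.ext h hp2
      · exact absurd h hv0
    set D : Set X := (fun z => (c₀ - v) + z) '' (⇑L '' E) with hD
    have hEclosed : IsClosed E := by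
      apply IsClosed.inter
      · exact isClosed_le continuous_const continuous_fst
      · exact isClosed_le continuous_const (continuous_fst.mul continuous_snd)
    have hEconv : Convex ℝ E := by
      rintro p ⟨hp1, hp2⟩ q ⟨hq1, hq2⟩ a b ha hb hab
      have hp1' : 0 < p.1 := by
        rcases eq_or_lt_of_le hp1 with h | h
        · exfalso; rw [← h, zero_mul] at hp2; linarith
        · exact h
      have hq1' : 0 < q.1 := by
        rcases eq_or_lt_of_le hq1 with h | h
        · exfalso; rw [← h, zero_mul] at hq2; linarith
        · exact h
      have hp2' : 0 < p.2 := by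
        by_contra h
        push_neg at h
        nlinarith [mul_nonneg hp1 (neg_nonneg.2 h)]
      have hq2' : 0 < q.2 := by
        by_contra h
        push_neg at h
        nlinarith [mul_nonneg hq1 (neg_nonneg.2 h)]
      constructor
      · simp only [Prod.fst_add, Prod.smul_fst, smul_eq_mul]
        positivity
      · simp only [Prod.fst_add, Prod.snd_add, Prod.smul_fst, Prod.smul_snd, smul_eq_mul]
        have h11 : 1 ≤ (p.1 * p.2) * (q.1 * q.2) := by nlinarith
        have hsum : 2 ≤ p.1 * q.2 + q.1 * p.2 := by
          nlinarith [sq_nonneg (p.1 * q.2 - q.1 * p.2), h11, mul_pos hp1' hq2',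
            mul_pos hq1' hp2']
        have e1 : a^2 * 1 ≤ a^2 * (p.1 * p.2) := by nlinarith [sq_nonneg a]
        have e2 : b^2 * 1 ≤ b^2 * (q.1 * q.2) := by nlinarith [sq_nonneg b]
        have e3 : (a*b) * 2 ≤ (a*b) * (p.1 * q.2 + q.1 * p.2) :=
          mul_le_mul_of_nonneg_left hsum (mul_nonneg ha hb)
        nlinarith [sq_nonneg (a + b)]
    have hEne : E.Nonempty := ⟨(1, 1), by constructor <;> norm_num⟩
    have hDne : D.Nonempty := hEne.image _ |>.image _
    have hDcl : IsClosed D := by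
      have hemb : IsClosedEmbedding ⇑L := LinearMap.isClosedEmbedding_of_injective hLker
      have h1 : IsClosed (⇑L '' E) := hemb.isClosedMap _ hEclosed
      exact (Homeomorph.addLeft (c₀ - v)).isClosedMap _ h1
    have hDconv : Convex ℝ D := (hEconv.linear_image L).translate _
    have hfD : ∀ x ∈ D, ∃ p : ℝ × ℝ, p ∈ E ∧ f x = s + p.2 := by
      rintro x ⟨z, ⟨p, hp, rfl⟩, rfl⟩
      refine ⟨p, hp, ?_⟩
      rw [hLapp]
      rw [map_add, map_sub, map_add, map_smul, map_smul, hfv, hw, hc₀s]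
      simp
    have hdisj : Disjoint C D := by
      rw [Set.disjoint_left]
      intro x hxC hxD
      obtain ⟨p, hp, hfx⟩ := hfD x hxD
      have hp2 : 0 < p.2 := by
        rcases hp with ⟨h1, h2⟩
        nlinarith
      have := hub x hxC
      rw [hfx] at this
      linarith
    obtain ⟨g, hg0, a, b, hab, hga, hgb⟩ := hssp D hDne hDcl hDconv hdisj
    -- derive contradiction with sequences
    obtain ⟨n, hn⟩ := exists_nat_gt (‖g‖ * ‖w‖ / (b - a))
    set xs : X := c₀ + (n:ℝ) • v with hxs
    have hxsC : xs ∈ C := hrec c₀ hc₀ _ (Nat.cast_nonneg n)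
    set ys : X := (c₀ - v) + L ((n:ℝ)+1, 1/((n:ℝ)+1)) with hys
    have hysD : ys ∈ D := by
      refine ⟨_, ⟨((n:ℝ)+1, 1/((n:ℝ)+1)), ⟨?_, ?_⟩, rfl⟩, rfl⟩
      · positivity
      · have : ((n:ℝ)+1) * (1/((n:ℝ)+1)) = 1 := by field_simp
        rw [this]
    have hdiff : ys - xs = (1/((n:ℝ)+1)) • w := by
      rw [hys, hxs, hLapp]
      push_cast
      module
    have h1 : g xs ≤ a := hga xs hxsC
    have h2 : b ≤ g ys := hgb ys hysD
    have h3 : g ys - g xs = (1/((n:ℝ)+1)) * g w := by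
      rw [← map_sub, hdiff, map_smul, smul_eq_mul]
    have hgw : g w ≤ ‖g‖ * ‖w‖ := by
      have h := g.le_opNorm w
      rw [Real.norm_eq_abs] at h
      linarith [le_abs_self (g w)]
    have hnpos : (0:ℝ) < (n:ℝ)+1 := by positivity
    have hgwpos : 0 ≤ ‖g‖ * ‖w‖ := by positivity
    have hlast : b - a ≤ (1/((n:ℝ)+1)) * (‖g‖ * ‖w‖) := by
      have := mul_le_mul_of_nonneg_left hgw (le_of_lt (by positivity : (0:ℝ) < 1/((n:ℝ)+1)))
      linarith
    rw [div_lt_iff₀ (by linarith : (0:ℝ) < b - a)] at hn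
    have : (1/((n:ℝ)+1)) * (‖g‖ * ‖w‖) < b - a := by
      rw [one_div, inv_mul_lt_iff₀ hnpos]
      nlinarith
    linarith
  · -- sup not attained : hyperplane
    have hlt : ∀ c ∈ C, f c < s := fun c hc =>
      lt_of_le_of_ne (hub c hc) (fun h => hatt ⟨c, hc, h⟩)
    set D : Set X := f ⁻¹' {s} with hD
    have hDcl : IsClosed D := isClosed_singleton.preimage f.continuous
    have hDconv : Convex ℝ D := by
      intro x hx y hy a b ha hb hab
      simp only [hD, Set.mem_preimage, Set.mem_singleton_iff] at *
      rw [map_add, map_smul, map_smul, hx, hy, smul_eq_mul, smul_eq_mul]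
      linear_combination s * hab
    have hDne : D.Nonempty := ⟨s • w, by simp [hD, Set.mem_preimage, map_smul, hw]⟩
    have hdisj : Disjoint C D := by
      rw [Set.disjoint_left]
      intro x hxC hxD
      simp only [hD, Set.mem_preimage, Set.mem_singleton_iff] at hxD
      exact absurd hxD (ne_of_lt (hlt x hxC))
    obtain ⟨g, hg0, a, b, hab, hga, hgb⟩ := hssp D hDne hDcl hDconv hdisj
    set ε : ℝ := (b - a) / (2 * (‖g‖ * ‖w‖ + 1)) with hε
    have hgwpos : (0:ℝ) ≤ ‖g‖ * ‖w‖ := by positivity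
    have hεpos : 0 < ε := by
      rw [hε]; exact div_pos (by linarith) (by positivity)
    obtain ⟨z, hz, hcs⟩ : ∃ z ∈ f '' C, s - ε < z :=
      exists_lt_of_lt_csSup hCim (by linarith)
    obtain ⟨cc, hcc, rfl⟩ := hz
    set d : X := cc + (s - f cc) • w with hd
    have hdD : d ∈ D := by
      simp only [hD, Set.mem_preimage, Set.mem_singleton_iff, hd, map_add, map_smul,
        smul_eq_mul, hw]
      ring
    have h1 : b ≤ g d := hgb d hdD
    have h2 : g cc ≤ a := hga cc hcc
    have h3 : g d - g cc = (s - f cc) * g w := by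
      rw [hd]
      rw [map_add, map_smul, smul_eq_mul]
      ring
    have hgw : |g w| ≤ ‖g‖ * ‖w‖ := by
      have h := g.le_opNorm w
      rwa [Real.norm_eq_abs] at h
    have hsfc : 0 ≤ s - f cc := by linarith [hub cc hcc]
    have h4 : (s - f cc) * g w ≤ ε * (‖g‖ * ‖w‖ + 1) := by
      have step1 : (s - f cc) * g w ≤ (s - f cc) * |g w| :=
        mul_le_mul_of_nonneg_left (le_abs_self _) hsfc
      have step2 : (s - f cc) * |g w| ≤ (s - f cc) * (‖g‖ * ‖w‖ + 1) :=
        mul_le_mul_of_nonneg_left (by linarith) hsfc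
      have step3 : (s - f cc) * (‖g‖ * ‖w‖ + 1) ≤ ε * (‖g‖ * ‖w‖ + 1) :=
        mul_le_mul_of_nonneg_right (by linarith) (by linarith)
      linarith
    have h5 : ε * (‖g‖ * ‖w‖ + 1) = (b - a) / 2 := by
      rw [hε]
      field_simp
    linarith


/-- Backward direction. -/
lemma barrier_imp_ssp [FiniteDimensional ℝ X] {C : Set X} (hne : C.Nonempty) (hcl : IsClosed C)
    (hconv : Convex ℝ C) (hB : barrierCone C ⊆ interior (barrierCone C) ∪ {0}) :
    StrongSepProperty C := by
  intro D hDne hDcl hDconv hdisj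
  by_cases hgap : ∃ δ : ℝ, 0 < δ ∧ ∀ c ∈ C, ∀ d ∈ D, δ ≤ ‖c - d‖
  · obtain ⟨δ, hδ, hg⟩ := hgap
    exact sep_of_gap hconv hDconv hne hDne hδ hg
  exfalso
  push_neg at hgap
  have hseq : ∀ n : ℕ, ∃ c ∈ C, ∃ d ∈ D, ‖c - d‖ < 1/((n:ℝ)+1) := by
    intro n
    obtain ⟨c, hc, d, hd, h⟩ := hgap (1/((n:ℝ)+1)) (by positivity)
    exact ⟨c, hc, d, hd, h⟩
  choose c hcC d hdD hcd using hseq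
  have hdisj' : ∀ x, x ∈ C → x ∉ D := fun x hx => Set.disjoint_left.1 hdisj hx
  obtain ⟨c₀, hc₀⟩ := hne
  obtain ⟨d₀, hd₀⟩ := hDne
  have htend0 : Tendsto (fun n => c n - d n) atTop (𝓝 0) :=
    squeeze_zero_norm (fun n => (hcd n).le) tendsto_one_div_add_atTop_nhds_zero_nat
  have h0 : (0:X) ∈ closure (C - D) := by
    refine mem_closure_of_tendsto htend0 (Eventually.of_forall fun n => ?_)
    exact Set.sub_mem_sub (hcC n) (hdD n)
  obtain ⟨f, hf0, hfsep⟩ := weak_sep hconv hDconv ⟨c₀, hc₀⟩ ⟨d₀, hd₀⟩ hdisj' h0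
  have hfB : f ∈ barrierCone C := ⟨f d₀, fun cx hcx => hfsep cx hcx d₀ hd₀⟩
  have hfint : f ∈ interior (barrierCone C) := by
    rcases hB hfB with h | h
    · exact h
    · exact absurd h hf0
  -- find shared recession direction
  by_cases hbd : ∃ R : ℝ, {n | ‖c n‖ ≤ R}.Infinite
  · obtain ⟨R, hR⟩ := hbd
    have hfreq : ∃ᶠ n in atTop, c n ∈ C ∩ Metric.closedBall 0 R := by
      rw [Nat.frequently_atTop_iff_infinite]
      refine hR.mono fun n hn => ?_
      exact ⟨hcC n, by simpa [Metric.mem_closedBall, dist_zero_right] using hn⟩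
    have hcomp : IsCompact (C ∩ Metric.closedBall 0 R) :=
      (isCompact_closedBall (0:X) R).inter_left hcl
    obtain ⟨x, hxmem, φ, hφ, hxlim⟩ := hcomp.tendsto_subseq' hfreq
    have hxC : x ∈ C := hxmem.1
    have hdlim : Tendsto (fun k => d (φ k)) atTop (𝓝 x) := by
      have h1 : Tendsto (fun k => c (φ k) - d (φ k)) atTop (𝓝 0) :=
        htend0.comp hφ.tendsto_atTop
      have h2 := hxlim.sub h1
      rw [sub_zero] at h2
      refine h2.congr fun k => ?_
      simp [Function.comp]
    have hxD : x ∈ D := hDcl.mem_of_tendsto hdlim (Eventually.of_forall fun k => hdD (φ k))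
    exact hdisj' x hxC hxD
  · push_neg at hbd
    have hsel : ∀ k : ℕ, ∃ n : ℕ, (k:ℝ) + 1 ≤ ‖c n‖ := by
      intro k
      obtain ⟨n, hn⟩ := ((hbd ((k:ℝ)+1)).infinite_compl).nonempty
      simp only [Set.mem_compl_iff, Set.mem_setOf_eq, not_le] at hn
      exact ⟨n, hn.le⟩
    choose ψ hψ using hsel
    obtain ⟨v, hvnorm, φ, hφ, hlim⟩ := exists_unit_limit (fun k => c (ψ k)) hψ
    have hv0 : v ≠ 0 := by intro h; rw [h, norm_zero] at hvnorm; norm_num at hvnorm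
    set r : ℕ → ℝ := fun k => ‖c (ψ (φ k))‖ with hr
    have hrk : ∀ k : ℕ, (k:ℝ) + 1 ≤ r k := by
      intro k
      calc (k:ℝ) + 1 ≤ (φ k : ℝ) + 1 := by
            have : (k:ℝ) ≤ (φ k : ℝ) := by exact_mod_cast hφ.le_apply
            linarith
      _ ≤ ‖c (ψ (φ k))‖ := hψ (φ k)
    have hrt : Tendsto r atTop atTop := by
      refine tendsto_atTop_mono ?_ tendsto_natCast_atTop_atTop
      intro k; linarith [hrk k]
    have hrecC : ∀ x ∈ C, ∀ t : ℝ, 0 ≤ t → x + t • v ∈ C :=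
      recession_of_tendsto hcl hconv (fun k => c (ψ (φ k))) (fun k => hcC _) r hrt hlim
    have hlimD : Tendsto (fun k => (r k)⁻¹ • d (ψ (φ k))) atTop (𝓝 v) := by
      have hbound : ∀ k : ℕ, ‖(r k)⁻¹ • (d (ψ (φ k)) - c (ψ (φ k)))‖ ≤ (r k)⁻¹ := by
        intro k
        have hrpos : 0 < r k := lt_of_lt_of_le (by positivity : (0:ℝ) < (k:ℝ)+1) (hrk k)
        rw [norm_smul, Real.norm_eq_abs, abs_of_pos (inv_pos.2 hrpos)]
        have h1 : ‖d (ψ (φ k)) - c (ψ (φ k))‖ ≤ 1 := by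
          rw [norm_sub_rev]
          refine (hcd _).le.trans ?_
          rw [div_le_one (by positivity)]
          have hnn : (0:ℝ) ≤ ((ψ (φ k) : ℕ) : ℝ) := Nat.cast_nonneg _
          linarith
        calc (r k)⁻¹ * ‖d (ψ (φ k)) - c (ψ (φ k))‖ ≤ (r k)⁻¹ * 1 :=
              mul_le_mul_of_nonneg_left h1 (inv_nonneg.2 hrpos.le)
        _ = (r k)⁻¹ := mul_one _
      have hdiff : Tendsto (fun k => (r k)⁻¹ • (d (ψ (φ k)) - c (ψ (φ k)))) atTop (𝓝 0) :=
        squeeze_zero_norm hbound hrt.inv_tendsto_atTop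
      have hsum := hlim.add hdiff
      rw [add_zero] at hsum
      refine hsum.congr fun k => ?_
      rw [← smul_add]
      congr 1
      abel
    have hrecD : ∀ x ∈ D, ∀ t : ℝ, 0 ≤ t → x + t • v ∈ D :=
      recession_of_tendsto hDcl hDconv (fun k => d (ψ (φ k))) (fun k => hdD _) r hrt hlimD
    have hneg : f v < 0 :=
      interior_barrier_neg hfint hc₀ (fun t ht => hrecC c₀ hc₀ t ht) hv0
    have hplus : 0 ≤ f v := by
      have hmem : (-f) ∈ barrierCone D := by
        refine ⟨-(f c₀), fun dx hdx => ?_⟩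
        simp only [ContinuousLinearMap.neg_apply, neg_le_neg_iff]
        exact hfsep c₀ hc₀ dx hdx
      have := apply_le_of_recession hmem hd₀ (fun t ht => hrecD d₀ hd₀ t ht)
      simp only [ContinuousLinearMap.neg_apply] at this
      linarith
    linarith


/-- Part 2. -/
lemma part2 [FiniteDimensional ℝ X] {C : Set X} (hne : C.Nonempty) (hcl : IsClosed C)
    (hconv : Convex ℝ C) (hub : ¬ Bornology.IsBounded C) (hssp : StrongSepProperty C) :
    (interior C).Nonempty := by
  by_contra hint
  have hnb : ∀ k : ℕ, ∃ x, x ∈ C ∧ (k:ℝ)+1 ≤ ‖x‖ := by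
    intro k
    by_contra h
    push_neg at h
    refine hub (isBounded_iff_forall_norm_le.2 ⟨(k:ℝ)+1, fun x hx => ?_⟩)
    linarith [h x hx]
  choose y hyC hy using hnb
  obtain ⟨v, hvnorm, φ, hφ, hlim⟩ := exists_unit_limit y hy
  have hv0 : v ≠ 0 := by intro h; rw [h, norm_zero] at hvnorm; norm_num at hvnorm
  set r : ℕ → ℝ := fun k => ‖y (φ k)‖ with hr
  have hrk : ∀ k : ℕ, (k:ℝ) + 1 ≤ r k := by
    intro k
    calc (k:ℝ) + 1 ≤ (φ k : ℝ) + 1 := by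
          have : (k:ℝ) ≤ (φ k : ℝ) := by exact_mod_cast hφ.le_apply
          linarith
    _ ≤ ‖y (φ k)‖ := hy (φ k)
  have hrt : Tendsto r atTop atTop := by
    refine tendsto_atTop_mono ?_ tendsto_natCast_atTop_atTop
    intro k; linarith [hrk k]
  have hrec : ∀ x ∈ C, ∀ t : ℝ, 0 ≤ t → x + t • v ∈ C :=
    recession_of_tendsto hcl hconv (fun k => y (φ k)) (fun k => hyC _) r hrt hlim
  have hspan : affineSpan ℝ C ≠ ⊤ := by
    intro h
    rw [← hconv.interior_nonempty_iff_affineSpan_eq_top] at h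
    exact hint h
  have hWne : (affineSpan ℝ C).direction ≠ ⊤ := by
    intro h
    apply hspan
    rw [← AffineSubspace.direction_eq_top_iff_of_nonempty
      ((affineSpan_nonempty (k := ℝ)).2 hne)]
    exact h
  obtain ⟨f, hf0, hvan⟩ := exists_functional_vanishing _ hWne
  obtain ⟨c₀, hc₀⟩ := hne
  have hfB : f ∈ barrierCone C := by
    refine ⟨f c₀, fun cx hcx => ?_⟩
    have hmem : cx - c₀ ∈ (affineSpan ℝ C).direction := by
      have := AffineSubspace.vsub_mem_direction (subset_affineSpan ℝ C hcx)
        (subset_affineSpan ℝ C hc₀)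
      simpa using this
    have := hvan _ hmem
    rw [map_sub] at this
    linarith
  have hintf : f ∈ interior (barrierCone C) := by
    rcases ssp_imp_sub ⟨c₀, hc₀⟩ hcl hconv hssp hfB with h | h
    · exact h
    · exact absurd h hf0
  have hneg : f v < 0 :=
    interior_barrier_neg hintf hc₀ (fun t ht => hrec c₀ hc₀ t ht) hv0
  have hvW : v ∈ (affineSpan ℝ C).direction := by
    have h1 : c₀ + (1:ℝ) • v ∈ C := hrec c₀ hc₀ 1 zero_le_one
    have := AffineSubspace.vsub_mem_direction (subset_affineSpan ℝ C h1)
      (subset_affineSpan ℝ C hc₀)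
    simpa using this
  have := hvan v hvW
  linarith


end AuxLemmas

/-- In a finite-dimensional real normed space, a nonempty closed convex set `C`
has the strong separation property iff `barc(C) = Int barc(C) ∪ {0}`; moreover, if `C` is
unbounded and has the strong separation property then `Int C ≠ ∅`. -/
theorem statement13 {X : Type*} [NormedAddCommGroup X] [NormedSpace ℝ X]
    [FiniteDimensional ℝ X]
    (C : Set X) (hne : C.Nonempty) (hcl : IsClosed C) (hconv : Convex ℝ C) :
    (StrongSepProperty C ↔ barrierCone C = interior (barrierCone C) ∪ {0}) ∧
      (¬ Bornology.IsBounded C → StrongSepProperty C → (interior C).Nonempty) := by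
  constructor
  · constructor
    · intro hssp
      refine Set.Subset.antisymm (ssp_imp_sub hne hcl hconv hssp) ?_
      rintro f (hf | hf)
      · exact interior_subset hf
      · rw [Set.mem_singleton_iff] at hf
        rw [hf]
        exact barrier_zero_mem C
    · intro hB
      exact barrier_imp_ssp hne hcl hconv (le_of_eq hB)
  · intro hub hssp
    exact part2 hne hcl hconv hub hssp
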